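/- Let L be a complete atomistic lattice. Then the lattice of **-closed down-sets of L is isomorphic to the power set lattice of the set of atoms of L, via the map sending a set α of atoms to the **-closure of α ∪ {0}, with inverse sending a **-closed down-set to the set of atoms it contains. -/
import Mathlib


variable {L : Type*} [CompleteLattice L]

/-- A down-set containing the least element. -/
def IsDownSet (ω : Set L) : Prop :=
  ⊥ ∈ ω ∧ ∀ ⦃x y : L⦄, x ∈ ω → y ≤ x → y ∈ ω

/-- The pseudo-complement: the largest down-set whose intersection with ω is {⊥}. -/
def pcomp (ω : Set L) : Set L :=
  ⋃₀ {ω1 : Set L | IsDownSet ω1 ∧ ω ∩ ω1 = {⊥}}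

/-- L is atomistic: every element is the join of the atoms below it. -/
def Atomistic (L : Type*) [CompleteLattice L] : Prop :=
  ∀ b : L, b = sSup {a : L | IsAtom a ∧ a ≤ b}

private lemma atom_le_atom {a b : L} (ha : IsAtom a) (hb : IsAtom b) (h : b ≤ a) : b = a := by
  rcases h.lt_or_eq with h | h
  · exact absurd (ha.2 b h) hb.1
  · exact h

private lemma pcomp_eq (S : Set L) (hS : ⊥ ∈ S) :
    pcomp S = {x | ∀ y ≤ x, y ∈ S → y = ⊥} := by
  ext x
  constructor
  · rintro ⟨ω1, ⟨hd, hint⟩, hx⟩ y hy hyS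
    have : y ∈ S ∩ ω1 := ⟨hyS, hd.2 hx hy⟩
    rwa [hint] at this
  · intro hx
    refine ⟨{x | ∀ y ≤ x, y ∈ S → y = ⊥}, ⟨⟨?_, ?_⟩, ?_⟩, hx⟩
    · intro y hy _; exact le_bot_iff.mp hy
    · intro u v hu hv y hy hyS; exact hu y (hy.trans hv) hyS
    · apply Set.eq_singleton_iff_unique_mem.mpr
      refine ⟨⟨hS, fun y hy _ => le_bot_iff.mp hy⟩, ?_⟩
      rintro z ⟨hzS, hz⟩; exact hz z le_rfl hzS

private lemma pcomp_down (S : Set L) (hS : ⊥ ∈ S) : IsDownSet (pcomp S) := by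
  rw [pcomp_eq S hS]
  exact ⟨fun y hy _ => le_bot_iff.mp hy, fun u v hu hv y hy hyS => hu y (hy.trans hv) hyS⟩

private lemma pcomp_of_down (hL : Atomistic L) (ω : Set L) (hω : IsDownSet ω) :
    pcomp ω = {x | ∀ a, IsAtom a → a ≤ x → a ∉ ω} := by
  rw [pcomp_eq ω hω.1]
  ext x
  constructor
  · intro hx a ha hax haω
    exact ha.1 (hx a hax haω)
  · intro hx y hyx hyω
    by_contra hy
    have hne : {a : L | IsAtom a ∧ a ≤ y}.Nonempty := by
      by_contra h
      rw [Set.not_nonempty_iff_eq_empty] at h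
      have := hL y
      rw [h, sSup_empty] at this
      exact hy this
    obtain ⟨a, ha, hay⟩ := hne
    exact hx a ha (hay.trans hyx) (hω.2 hyω hay)

private lemma pcomp_pcomp_of_down (hL : Atomistic L) (ω : Set L) (hω : IsDownSet ω) :
    pcomp (pcomp ω) = {x | ∀ a, IsAtom a → a ≤ x → a ∈ ω} := by
  have h1 : IsDownSet (pcomp ω) := pcomp_down ω hω.1
  rw [pcomp_of_down hL _ h1]
  ext x
  simp only [Set.mem_setOf_eq]
  refine forall_congr' fun a => imp_congr_right fun ha => imp_congr_right fun _ => ?_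
  rw [pcomp_of_down hL ω hω]
  simp only [Set.mem_setOf_eq]
  push_neg
  constructor
  · rintro ⟨b, hb, hba, hbω⟩
    rwa [← atom_le_atom ha hb hba]
  · intro haω
    exact ⟨a, ha, le_rfl, haω⟩

private lemma phi_eq (hL : Atomistic L) (α : Set {a : L // IsAtom a}) :
    pcomp (pcomp (insert (⊥ : L) ((fun a : {a : L // IsAtom a} => (a : L)) '' α)))
      = {x | ∀ a, IsAtom a → a ≤ x → a ∈ (fun a : {a : L // IsAtom a} => (a : L)) '' α} := by
  set S := insert (⊥ : L) ((fun a : {a : L // IsAtom a} => (a : L)) '' α) with hSdef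
  have hS : ⊥ ∈ S := Set.mem_insert _ _
  have h1 : IsDownSet (pcomp S) := pcomp_down S hS
  rw [pcomp_of_down hL _ h1]
  ext x
  simp only [Set.mem_setOf_eq]
  refine forall_congr' fun a => imp_congr_right fun ha => imp_congr_right fun _ => ?_
  rw [pcomp_eq S hS]
  simp only [Set.mem_setOf_eq]
  push_neg
  constructor
  · rintro ⟨y, hya, hyS, hy⟩
    rcases hyS with rfl | ⟨b, hbα, rfl⟩
    · exact absurd rfl hy
    · have hba : (b : L) = a := atom_le_atom ha b.2 hya
      rw [← hba]
      exact ⟨b, hbα, rfl⟩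
  · intro h
    exact ⟨a, le_rfl, Set.mem_insert_of_mem _ h, ha.1⟩

theorem closedDownsets_iso_powerset_of_atoms (hL : Atomistic L) :
    letI φ : Set {a : L // IsAtom a} → Set L :=
      fun α => pcomp (pcomp (insert (⊥ : L) ((fun a : {a : L // IsAtom a} => (a : L)) '' α)))
    (∀ α, IsDownSet (φ α) ∧ pcomp (pcomp (φ α)) = φ α) ∧
    (∀ α, {a : {a : L // IsAtom a} | (a : L) ∈ φ α} = α) ∧
    (∀ ω : Set L, IsDownSet ω → pcomp (pcomp ω) = ω →
      φ {a : {a : L // IsAtom a} | (a : L) ∈ ω} = ω) ∧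
    (∀ α β, α ⊆ β ↔ φ α ⊆ φ β) := by
  have hdown : ∀ α : Set {a : L // IsAtom a},
      IsDownSet {x : L | ∀ a, IsAtom a → a ≤ x →
        a ∈ (fun a : {a : L // IsAtom a} => (a : L)) '' α} := by
    intro α
    constructor
    · intro a ha hab
      exact absurd (le_bot_iff.mp hab) ha.1
    · intro x y hx hyx a ha hay
      exact hx a ha (hay.trans hyx)
  refine ⟨?_, ?_, ?_, ?_⟩
  · intro α
    beta_reduce
    rw [phi_eq hL α]
    refine ⟨hdown α, ?_⟩
    rw [pcomp_pcomp_of_down hL _ (hdown α)]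
    ext x
    simp only [Set.mem_setOf_eq]
    constructor
    · intro h a ha hax
      exact h a ha hax a ha le_rfl
    · intro h a ha hax b hb hba
      rw [atom_le_atom ha hb hba]
      exact h a ha hax
  · intro α
    ext a
    simp only [Set.mem_setOf_eq, phi_eq hL α]
    constructor
    · intro h
      obtain ⟨b, hbα, hba⟩ := h a.val a.2 le_rfl
      rwa [show b = a from Subtype.ext hba] at hbα
    · intro h b hb hba
      refine ⟨a, h, (atom_le_atom a.2 hb hba).symm ▸ rfl⟩
  · intro ω hω hωcc
    beta_reduce
    rw [phi_eq hL]
    conv_rhs => rw [← hωcc, pcomp_pcomp_of_down hL ω hω]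
    ext x
    simp only [Set.mem_setOf_eq]
    refine forall_congr' fun a => imp_congr_right fun ha => imp_congr_right fun _ => ?_
    constructor
    · rintro ⟨b, hbω, rfl⟩
      exact hbω
    · intro haω
      exact ⟨⟨a, ha⟩, haω, rfl⟩
  · intro α β
    constructor
    · intro hαβ
      beta_reduce
      rw [phi_eq hL α, phi_eq hL β]
      intro x hx a ha hax
      obtain ⟨b, hbα, rfl⟩ := hx a ha hax
      exact ⟨b, hαβ hbα, rfl⟩
    · intro h a haα
      have hmem : (a : L) ∈ pcomp (pcomp (insert (⊥ : L)
          ((fun a : {a : L // IsAtom a} => (a : L)) '' α))) := by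
        rw [phi_eq hL α]
        intro b hb hba
        exact ⟨a, haα, (atom_le_atom a.2 hb hba).symm ▸ rfl⟩
      have := h hmem
      beta_reduce at this
      rw [phi_eq hL β] at this
      obtain ⟨b, hbβ, hba⟩ := this a.val a.2 le_rfl
      rwa [show b = a from Subtype.ext hba] at hbβ
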